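/- Let E be a Hilbert C*-module over a finite dimensional C*-algebra A and K ∈ K(E). (1) If E is not finitely generated, then 0 ∈ σ(K), the spectrum of K in L(E). (2) Every nonzero λ ∈ σ(K) is an eigenvalue of K, i.e., Ker(λI − K) ≠ {0}. -/

import Mathlib

open scoped RightActions

/-- Mathlib's `CStarModule` of December 2024 (right `A`-action through `Aᵐᵒᵖ`); the current
Mathlib class of that name uses a left action `SMul A E` instead. -/
class CStarModule' (A E : Type*) [NonUnitalSemiring A] [StarRing A] [Module ℂ A]
    [AddCommGroup E] [Module ℂ E] [PartialOrder A] [SMul Aᵐᵒᵖ E] [Norm A] [Norm E]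
    extends Inner A E where
  inner_add_right {x} {y} {z} : inner x (y + z) = inner x y + inner x z
  inner_self_nonneg {x} : 0 ≤ inner x x
  inner_self {x} : inner x x = 0 ↔ x = 0
  inner_op_smul_right {a : A} {x y : E} : inner x (y <• a) = inner x y * a
  inner_smul_right_complex {z : ℂ} {x} {y} : inner x (z • y) = z • inner x y
  star_inner x y : star (inner x y) = inner y x
  norm_eq_sqrt_norm_inner_self x : ‖x‖ = √‖inner x x‖

section

variable {A : Type*} [CStarAlgebra A] [PartialOrder A] [StarOrderedRing A]
variable {E : Type*} [NormedAddCommGroup E] [NormedSpace ℂ E] [SMul Aᵐᵒᵖ E]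
  [CStarModule' A E] [CompleteSpace E]

local notation "⟪" x ", " y "⟫" => inner (𝕜 := A) x y

/-- `T` is a bounded adjointable `A`-linear operator with adjoint `T'`. -/
def IsAdjointableWith (T T' : E →L[ℂ] E) : Prop :=
  (∀ (a : A) (x : E), T (x <• a) = T x <• a) ∧
  ∀ x y : E, ⟪T x, y⟫ = ⟪x, T' y⟫

/-- The orthogonal complement of a subset of a Hilbert C*-module. -/
def ortho (W : Set E) : Set E := {y | ∀ x ∈ W, ⟪x, y⟫ = (0 : A)}

/-- `W` is orthogonally complemented in `E`. -/
def OrthoComplemented (W : Set E) : Prop :=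
  ∀ z : E, ∃ x ∈ W, ∃ y ∈ ortho (A := A) W, z = x + y

/-- `W` is a closed `A`-submodule of `E`. -/
def IsClosedSubmodule (W : Submodule ℂ E) : Prop :=
  IsClosed (W : Set E) ∧ ∀ (a : A), ∀ x ∈ W, x <• a ∈ W

/-- An orthogonal projection in `L(E)`: an `A`-linear, idempotent, self-adjoint operator. -/
def IsOrthoProjection (P : E →L[ℂ] E) : Prop :=
  (∀ (a : A) (x : E), P (x <• a) = P x <• a) ∧ P.comp P = P ∧
  ∀ x y : E, ⟪P x, y⟫ = ⟪x, P y⟫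

/-- A "compact" operator on a Hilbert C*-module: a member of the closure of the span
of the rank-one operators `z ↦ x ⟨y, z⟩`. -/
def IsCompactOp (K : E →L[ℂ] E) : Prop :=
  K ∈ closure (Submodule.span ℂ
    {S : E →L[ℂ] E | ∃ x y : E, ∀ z : E, S z = x <• ⟪y, z⟫} : Set (E →L[ℂ] E))

/-- `E` is a finitely generated Hilbert `A`-module. -/
def IsFinGen : Prop :=
  ∃ (n : ℕ) (g : Fin n → E), ∀ x : E,
    x ∈ Submodule.span ℂ {y : E | ∃ (i : Fin n) (a : A), y = g i <• a}

/-- `T` is invertible in `L(E)`, the bounded adjointable operators. -/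
def InvertibleInL (T : E →L[ℂ] E) : Prop :=
  ∃ S S' : E →L[ℂ] E, IsAdjointableWith (A := A) S S' ∧ S.comp T = 1 ∧ T.comp S = 1

namespace CStarModule'

attribute [simp] CStarModule'.inner_add_right CStarModule'.star_inner
  CStarModule'.inner_op_smul_right CStarModule'.inner_smul_right_complex

@[simp]
lemma inner_add_left {x y z : E} : ⟪x + y, z⟫ = ⟪x, z⟫ + ⟪y, z⟫ := by
  rw [← star_star (r := ⟪x + y, z⟫)]
  simp only [CStarModule'.inner_add_right, star_add, CStarModule'.star_inner]

@[simp]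
lemma inner_op_smul_left {a : A} {x y : E} : ⟪x <• a, y⟫ = star a * ⟪x, y⟫ := by
  rw [← CStarModule'.star_inner]; simp

@[simp]
lemma inner_smul_left_complex {z : ℂ} {x y : E} : ⟪z • x, y⟫ = star z • ⟪x, y⟫ := by
  rw [← CStarModule'.star_inner]
  simp

@[simp]
lemma inner_smul_left_real {z : ℝ} {x y : E} : ⟪z • x, y⟫ = z • ⟪x, y⟫ := by
  have h₁ : z • x = (z : ℂ) • x := by simp
  rw [h₁, ← CStarModule'.star_inner, CStarModule'.inner_smul_right_complex]
  simp

@[simp]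
lemma inner_smul_right_real {z : ℝ} {x y : E} : ⟪x, z • y⟫ = z • ⟪x, y⟫ := by
  have h₁ : z • y = (z : ℂ) • y := by simp
  rw [h₁, ← CStarModule'.star_inner, inner_smul_left_complex]
  simp

/-- The inner product bundled as a sesquilinear map. -/
def innerₛₗ : E →ₗ⋆[ℂ] E →ₗ[ℂ] A where
  toFun x := { toFun := fun y => ⟪x, y⟫
               map_add' := fun z y => by simp
               map_smul' := fun z y => by simp }
  map_add' z y := by ext; simp [inner_add_left]
  map_smul' z y := by ext; simp [inner_smul_left_complex]

lemma innerₛₗ_apply {x y : E} : innerₛₗ x y = ⟪x, y⟫ := rfl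

@[simp]
lemma inner_zero_right {x : E} : ⟪x, 0⟫ = 0 := by simp [← innerₛₗ_apply]
@[simp]
lemma inner_zero_left {x : E} : ⟪0, x⟫ = 0 := by simp [← innerₛₗ_apply]
@[simp]
lemma inner_sub_right {x y z : E} : ⟪x, y - z⟫ = ⟪x, y⟫ - ⟪x, z⟫ := by
  simp [← innerₛₗ_apply]
@[simp]
lemma inner_sub_left {x y z : E} : ⟪x - y, z⟫ = ⟪x, z⟫ - ⟪y, z⟫ := by
  simp [← innerₛₗ_apply]

lemma isSelfAdjoint_inner_self {x : E} : IsSelfAdjoint ⟪x, x⟫ := CStarModule'.star_inner _ _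

lemma norm_sq_eq {x : E} : ‖x‖ ^ 2 = ‖⟪x, x⟫‖ := by
  simp [CStarModule'.norm_eq_sqrt_norm_inner_self (A := A)]

lemma inner_mul_inner_swap_le' {x y : E} : ⟪y, x⟫ * ⟪x, y⟫ ≤ ‖x‖ ^ 2 • ⟪y, y⟫ := by
  rcases eq_or_ne x 0 with h | h
  · simp [h, inner_zero_left, inner_zero_right]
  · have hx : 0 < ‖x‖ := norm_pos_iff.2 h
    have h₁ : ∀ (b : A),
        (0 : A) ≤ ‖x‖ ^ 2 • (star b * b) - ‖x‖ ^ 2 • (star b * ⟪x, y⟫)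
                  - ‖x‖ ^ 2 • (⟪y, x⟫ * b) + ‖x‖ ^ 2 • (‖x‖ ^ 2 • ⟪y, y⟫) := fun b => by
      calc (0 : A) ≤ ⟪x <• b - ‖x‖ ^ 2 • y, x <• b - ‖x‖ ^ 2 • y⟫ :=
                CStarModule'.inner_self_nonneg
        _ = star b * ⟪x, x⟫ * b - ‖x‖ ^ 2 • (star b * ⟪x, y⟫)
                  - ‖x‖ ^ 2 • (⟪y, x⟫ * b) + ‖x‖ ^ 2 • (‖x‖ ^ 2 • ⟪y, y⟫) := by
            simp only [inner_sub_right, CStarModule'.inner_op_smul_right, inner_sub_left,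
              inner_op_smul_left, inner_smul_left_real, mul_sub, sub_mul, mul_smul_comm,
              smul_mul_assoc,
              inner_smul_right_real, smul_sub, mul_assoc]
            abel
        _ ≤ ‖x‖ ^ 2 • (star b * b) - ‖x‖ ^ 2 • (star b * ⟪x, y⟫)
                  - ‖x‖ ^ 2 • (⟪y, x⟫ * b) + ‖x‖ ^ 2 • (‖x‖ ^ 2 • ⟪y, y⟫) := by
            gcongr
            calc _ ≤ ‖⟪x, x⟫‖ • (star b * b) :=
                CStarAlgebra.star_left_conjugate_le_norm_smul isSelfAdjoint_inner_self
              _ = ‖x‖ ^ 2 • (star b * b) := by rw [norm_sq_eq (A := A)]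
    specialize h₁ ⟪x, y⟫
    simp only [CStarModule'.star_inner, sub_self, zero_sub, le_neg_add_iff_add_le,
      add_zero] at h₁
    rwa [smul_le_smul_iff_of_pos_left (pow_pos hx _)] at h₁

variable (E) in
lemma norm_inner_le {x y : E} : ‖⟪x, y⟫‖ ≤ ‖x‖ * ‖y‖ := by
  have := calc ‖⟪x, y⟫‖ ^ 2 = ‖⟪y, x⟫ * ⟪x, y⟫‖ := by
                rw [← CStarModule'.star_inner x y, CStarRing.norm_star_mul_self, pow_two]
    _ ≤ ‖‖x‖ ^ 2 • ⟪y, y⟫‖ := by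
                refine CStarAlgebra.norm_le_norm_of_nonneg_of_le ?_ inner_mul_inner_swap_le'
                rw [← CStarModule'.star_inner x y]
                exact star_mul_self_nonneg ⟪x, y⟫
    _ = ‖x‖ ^ 2 * ‖⟪y, y⟫‖ := by simp [norm_smul]
    _ = ‖x‖ ^ 2 * ‖y‖ ^ 2 := by rw [norm_sq_eq (A := A) (x := y)]
    _ = (‖x‖ * ‖y‖) ^ 2 := by simp only [mul_pow]
  refine (pow_le_pow_iff_left₀ (norm_nonneg _) ?_ (by simp)).mp this
  positivity

/-- The inner product bundled as a continuous sesquilinear map. -/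
noncomputable def innerSL : E →L⋆[ℂ] E →L[ℂ] A :=
  LinearMap.mkContinuous₂ (innerₛₗ : E →ₗ⋆[ℂ] E →ₗ[ℂ] A) 1 <| fun x y => by
    simp [innerₛₗ_apply, norm_inner_le E]

lemma innerSL_apply {x y : E} : innerSL x y = ⟪x, y⟫ := rfl

lemma continuous_inner : Continuous (fun x : E × E => ⟪x.1, x.2⟫) := by
  simp_rw [← innerSL_apply]
  fun_prop

end CStarModule'

section FredholmBanach


open Filter Topology

variable {X : Type*} [NormedAddCommGroup X] [NormedSpace ℂ X]

/-- Bounded below for injective `μ•1 - C` with `C` compact. -/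
lemma aux_bddBelow (C : X →L[ℂ] X) (hC : IsCompactOperator C) (mu : ℂ) (hmu : mu ≠ 0)
    (hinj : ∀ x : X, mu • x - C x = 0 → x = 0) :
    ∃ c : ℝ, 0 < c ∧ ∀ x : X, c * ‖x‖ ≤ ‖mu • x - C x‖ := by
  by_contra h
  push_neg at h
  have hseq : ∀ n : ℕ, ∃ u : X, ‖u‖ = 1 ∧ ‖mu • u - C u‖ < 1/(n+1) := by
    intro n
    obtain ⟨x, hx⟩ := h (1/(n+1)) (by positivity)
    have hx0 : x ≠ 0 := by
      rintro rfl
      simp at hx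
    have hxn : (0:ℝ) < ‖x‖ := norm_pos_iff.2 hx0
    refine ⟨‖x‖⁻¹ • x, ?_, ?_⟩
    · simp [norm_smul, abs_of_nonneg, inv_mul_cancel₀ hxn.ne']
    · have : mu • (‖x‖⁻¹ • x) - C (‖x‖⁻¹ • x) = ‖x‖⁻¹ • (mu • x - C x) := by
        rw [C.map_smul_of_tower, smul_comm, smul_sub]
      rw [this, norm_smul, norm_inv, norm_norm]
      calc ‖x‖⁻¹ * ‖mu • x - C x‖ < ‖x‖⁻¹ * (1/(n+1) * ‖x‖) := by
            exact mul_lt_mul_of_pos_left hx (by positivity)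
        _ = 1/(n+1) := by field_simp
  choose u hu1 hu2 using hseq
  obtain ⟨M, hMc, hMs⟩ :=
    hC.image_closedBall_subset_compact (𝕜₁ := ℂ) (f := (C : X →ₗ[ℂ] X)) 1
  have hmem : ∀ n, C (u n) ∈ M := fun n =>
    hMs ⟨u n, by simp [Metric.mem_closedBall, (hu1 n).le, dist_zero_right], rfl⟩
  obtain ⟨a, _, φ, hφ, ha⟩ := hMc.tendsto_subseq hmem
  have htend0 : Tendsto (fun n => mu • u (φ n) - C (u (φ n))) atTop (𝓝 0) := by
    rw [tendsto_zero_iff_norm_tendsto_zero]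
    apply squeeze_zero (fun n => norm_nonneg _) (fun n => (hu2 (φ n)).le)
    have : Tendsto (fun n : ℕ => 1/((n:ℝ)+1)) atTop (𝓝 0) := tendsto_one_div_add_atTop_nhds_zero_nat
    apply squeeze_zero (fun n => by positivity) (fun n => ?_) this
    have : n ≤ φ n := hφ.le_apply
    gcongr
  have htendu : Tendsto (fun n => u (φ n)) atTop (𝓝 (mu⁻¹ • a)) := by
    have h1 : Tendsto (fun n => mu • u (φ n)) atTop (𝓝 a) := by
      have := htend0.add ha
      simpa using this
    have := h1.const_smul mu⁻¹
    simpa [smul_smul, inv_mul_cancel₀ hmu] using this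
  have hna : ‖mu⁻¹ • a‖ = 1 := by
    have := (continuous_norm.tendsto _).comp htendu
    have h2 : Tendsto (fun n => ‖u (φ n)‖) atTop (𝓝 1) := by
      simpa [hu1] using tendsto_const_nhds (α := ℕ) (f := atTop) (a := (1:ℝ))
    exact tendsto_nhds_unique ((continuous_norm.tendsto _).comp htendu) h2
  have hCa : C (mu⁻¹ • a) = a := by
    have h3 : Tendsto (fun n => C (u (φ n))) atTop (𝓝 (C (mu⁻¹ • a))) :=
      (C.continuous.tendsto _).comp htendu
    exact tendsto_nhds_unique h3 ha
  have : mu • (mu⁻¹ • a) - C (mu⁻¹ • a) = 0 := by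
    rw [hCa, smul_smul, mul_inv_cancel₀ hmu, one_smul, sub_self]
  have := hinj _ this
  rw [this, norm_zero] at hna
  exact one_ne_zero hna.symm

lemma aux_closed_range [CompleteSpace X] (T : X →L[ℂ] X) {c : ℝ} (hc : 0 < c)
    (hb : ∀ x, c * ‖x‖ ≤ ‖T x‖) :
    IsClosed ((LinearMap.range (T : X →ₗ[ℂ] X) : Submodule ℂ X) : Set X) := by
  have ha : AntilipschitzWith (⟨c⁻¹, by positivity⟩ : NNReal) T :=
    ContinuousLinearMap.antilipschitz_of_bound T (fun x => by
      show ‖x‖ ≤ c⁻¹ * ‖T x‖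
      rw [le_inv_mul_iff₀ hc]
      exact hb x)
  have h2 := ha.isClosed_range T.uniformContinuous
  have : ((LinearMap.range (T : X →ₗ[ℂ] X) : Submodule ℂ X) : Set X) = Set.range T := by
    ext x; simp [LinearMap.mem_range]
  rw [this]
  exact h2

lemma fredholm_surj [CompleteSpace X] (K : X →L[ℂ] X) (hK : IsCompactOperator K)
    (lam : ℂ) (hlam : lam ≠ 0)
    (hinj : ∀ x : X, lam • x - K x = 0 → x = 0) :
    Function.Surjective ⇑(lam • (1 : X →L[ℂ] X) - K) := by
  set T : X →L[ℂ] X := lam • (1 : X →L[ℂ] X) - K with hT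
  have hTapp : ∀ x, T x = lam • x - K x := fun x => rfl
  have hTinj : Function.Injective ⇑T := by
    intro x y h
    have h0 : T (x - y) = 0 := by rw [map_sub, h, sub_self]
    rw [hTapp] at h0
    exact sub_eq_zero.mp (hinj _ h0)
  -- compact remainder of powers
  have hKpow : ∀ n : ℕ, IsCompactOperator ⇑(lam ^ n • (1 : X →L[ℂ] X) - T ^ n) := by
    intro n
    induction n with
    | zero =>
      have : lam ^ 0 • (1 : X →L[ℂ] X) - T ^ 0 = 0 := by
        simp
      rw [this]
      have : ⇑(0 : X →L[ℂ] X) = (0 : X → X) := by ext x; simp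
      rw [this]
      exact isCompactOperator_zero
    | succ n ih =>
      have hid : lam ^ (n+1) • (1 : X →L[ℂ] X) - T ^ (n+1)
          = lam ^ n • K + (lam ^ n • (1 : X →L[ℂ] X) - T ^ n) * T := by
        rw [pow_succ T n, hT]
        simp only [sub_mul, smul_mul_assoc, one_mul, mul_sub, mul_smul_comm, mul_one]
        rw [pow_succ lam n]
        module
      rw [hid]
      have h1 : IsCompactOperator ⇑(lam ^ n • K) := by
        have := hK.smul (lam ^ n)
        have hcoe : ⇑(lam ^ n • K) = lam ^ n • ⇑K := by ext x; simp
        rw [hcoe]; exact this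
      have h2 : IsCompactOperator ⇑((lam ^ n • (1 : X →L[ℂ] X) - T ^ n) * T) := by
        have hcoe : ⇑((lam ^ n • (1 : X →L[ℂ] X) - T ^ n) * T)
            = ⇑(lam ^ n • (1 : X →L[ℂ] X) - T ^ n) ∘ ⇑T := by ext x; simp [ContinuousLinearMap.mul_apply]
        rw [hcoe]
        exact ih.comp_clm T
      have hadd := h1.add h2
      have hcoe : ⇑(lam ^ n • K + (lam ^ n • (1 : X →L[ℂ] X) - T ^ n) * T)
          = ⇑(lam ^ n • K) + ⇑((lam ^ n • (1 : X →L[ℂ] X) - T ^ n) * T) := by ext x; simp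
      rw [hcoe]
      exact hadd
  -- powers injective
  have hTninj : ∀ n : ℕ, Function.Injective ⇑(T ^ n) := by
    intro n
    induction n with
    | zero => intro x y h; simpa using h
    | succ n ih =>
      rw [pow_succ]
      have hc : ⇑(T ^ n * T) = ⇑(T ^ n) ∘ ⇑T := by
        ext x; simp [ContinuousLinearMap.mul_apply]
      rw [hc]
      exact ih.comp hTinj
  set W : ℕ → Submodule ℂ X := fun n => LinearMap.range ((T ^ n : X →L[ℂ] X) : X →ₗ[ℂ] X) with hW
  have hWclosed : ∀ n : ℕ, IsClosed ((W n : Submodule ℂ X) : Set X) := by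
    intro n
    have hTnid : ∀ x : X, lam ^ n • x - (lam ^ n • (1 : X →L[ℂ] X) - T ^ n) x = (T ^ n) x := by
      intro x
      simp only [ContinuousLinearMap.sub_apply, ContinuousLinearMap.smul_apply,
        ContinuousLinearMap.one_apply]
      abel
    obtain ⟨c, hc, hcb⟩ := aux_bddBelow (lam ^ n • (1 : X →L[ℂ] X) - T ^ n) (hKpow n)
      (lam ^ n) (pow_ne_zero n hlam) (fun x hx => by
        rw [hTnid x] at hx
        have : (T ^ n) x = (T ^ n) 0 := by rw [hx, map_zero]
        exact hTninj n this)
    exact aux_closed_range (T ^ n) hc (fun x => by rw [← hTnid x]; exact hcb x)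
  by_contra hns
  rw [Function.Surjective] at hns
  push_neg at hns
  obtain ⟨z, hz⟩ := hns
  have hWsucc : ∀ n, W (n+1) ≤ W n := by
    intro n x hx
    obtain ⟨y, rfl⟩ := hx
    rw [pow_succ]
    exact ⟨T y, by simp [ContinuousLinearMap.mul_apply]⟩
  have hWanti : Antitone W := antitone_nat_of_succ_le hWsucc
  have hvnot : ∀ n : ℕ, (T ^ n) z ∉ W (n+1) := by
    intro n hmem
    obtain ⟨y, hy⟩ := hmem
    rw [ContinuousLinearMap.coe_coe, pow_succ, ContinuousLinearMap.mul_apply] at hy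
    exact hz y (hTninj n hy)
  have hTu : ∀ n : ℕ, ∀ x ∈ W n, T x ∈ W (n+1) := by
    intro n x hx
    obtain ⟨y, rfl⟩ := hx
    refine ⟨y, ?_⟩
    rw [ContinuousLinearMap.coe_coe, pow_succ', ContinuousLinearMap.mul_apply,
      ContinuousLinearMap.coe_coe]
  have hriesz : ∀ n : ℕ, ∃ u : X, u ∈ W n ∧ ‖u‖ = 1 ∧ ∀ w ∈ W (n+1), 1/2 ≤ ‖u - w‖ := by
    intro n
    set v := (T ^ n) z with hv
    have hvmem : v ∈ W n := ⟨z, rfl⟩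
    have hne : ((W (n+1) : Set X)).Nonempty := ⟨0, Submodule.zero_mem _⟩
    have hdpos : 0 < Metric.infDist v (W (n+1)) := by
      rw [← IsClosed.notMem_iff_infDist_pos (hWclosed (n+1)) hne]
      exact hvnot n
    set d := Metric.infDist v ((W (n+1) : Set X)) with hd
    obtain ⟨y, hyW, hyd⟩ := (Metric.infDist_lt_iff hne).mp (show d < 2*d by linarith)
    have hvy : v - y ≠ 0 := by
      rw [sub_ne_zero]
      rintro rfl
      exact hvnot n hyW
    set r := ‖v - y‖ with hr
    have hr0 : 0 < r := norm_pos_iff.2 hvy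
    have hr2d : r < 2*d := by rwa [dist_eq_norm] at hyd
    refine ⟨r⁻¹ • (v - y), ?_, ?_, ?_⟩
    · exact Submodule.smul_of_tower_mem _ _ (Submodule.sub_mem _ hvmem (hWsucc n hyW))
    · rw [norm_smul, norm_inv, norm_norm, ← hr, inv_mul_cancel₀ hr0.ne']
    · intro w hw
      have hmem2 : y + r • w ∈ W (n+1) :=
        Submodule.add_mem _ hyW (Submodule.smul_of_tower_mem _ r hw)
      have hdle : d ≤ ‖v - (y + r • w)‖ := by
        have := Metric.infDist_le_dist_of_mem (x := v) hmem2
        rwa [dist_eq_norm] at this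
      have heq : r⁻¹ • (v - y) - w = r⁻¹ • (v - (y + r • w)) := by
        have h3 : r⁻¹ • (r • w) = w := by
          rw [smul_smul, inv_mul_cancel₀ hr0.ne', one_smul]
        rw [sub_add_eq_sub_sub, smul_sub r⁻¹ (v - y) (r • w), h3]
      rw [heq, norm_smul, norm_inv, norm_norm, ← hr]
      calc (1:ℝ)/2 = (2*d)⁻¹ * d := by field_simp
        _ ≤ r⁻¹ * d := by gcongr
        _ ≤ r⁻¹ * ‖v - (y + r • w)‖ := by gcongr
  choose u huW hu1 husep using hriesz
  have hKT : ∀ x : X, K x = lam • x - T x := by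
    intro x; rw [hTapp]; abel
  have hsep : ∀ n m : ℕ, n < m → ‖lam‖/2 ≤ ‖K (u n) - K (u m)‖ := by
    intro n m hnm
    set w := u m + lam⁻¹ • (T (u n) - T (u m)) with hwdef
    have hwmem : w ∈ W (n+1) := by
      apply Submodule.add_mem
      · exact hWanti hnm (huW m)
      · apply Submodule.smul_mem
        apply Submodule.sub_mem
        · exact hTu n _ (huW n)
        · exact hWanti (Nat.succ_le_succ hnm.le) (hTu m _ (huW m))
    have hidK : K (u n) - K (u m) = lam • (u n - w) := by
      have h4 : lam • (lam⁻¹ • (T (u n) - T (u m))) = T (u n) - T (u m) := by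
        rw [smul_smul, mul_inv_cancel₀ hlam, one_smul]
      rw [hwdef, smul_sub, smul_add, h4, hKT (u n), hKT (u m)]
      abel
    rw [hidK, norm_smul]
    have := husep n w hwmem
    calc ‖lam‖/2 = ‖lam‖ * (1/2) := by ring
      _ ≤ ‖lam‖ * ‖u n - w‖ := by gcongr
  obtain ⟨M, hMc, hMs⟩ :=
    hK.image_closedBall_subset_compact (𝕜₁ := ℂ) (f := (K : X →ₗ[ℂ] X)) 1
  have hmem : ∀ n, K (u n) ∈ M := fun n =>
    hMs ⟨u n, by simp [Metric.mem_closedBall, (hu1 n).le, dist_zero_right], rfl⟩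
  obtain ⟨a, _, φ, hφ, ha⟩ := hMc.tendsto_subseq hmem
  have hlamn : (0:ℝ) < ‖lam‖ := norm_pos_iff.2 hlam
  obtain ⟨N, hN⟩ := Metric.tendsto_atTop.mp ha (‖lam‖/4) (by positivity)
  have h1 := hN N le_rfl
  have h2 := hN (N+1) (Nat.le_succ N)
  have hlt : dist (K (u (φ N))) (K (u (φ (N+1)))) < ‖lam‖/2 := by
    calc dist (K (u (φ N))) (K (u (φ (N+1))))
        ≤ dist (K (u (φ N))) a + dist (K (u (φ (N+1)))) a := dist_triangle_right _ _ _
      _ < ‖lam‖/4 + ‖lam‖/4 := add_lt_add h1 h2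
      _ = ‖lam‖/2 := by ring
  have hge := hsep (φ N) (φ (N+1)) (hφ (Nat.lt_succ_self N))
  rw [dist_eq_norm] at hlt
  linarith

end FredholmBanach

namespace Cstmt18

open CStarModule'

variable (A) in
lemma inner_ext {x y : E} (h : ∀ z : E, ⟪z, x⟫ = ⟪z, y⟫) : x = y := by
  have h0 : ⟪x - y, x - y⟫ = 0 := by
    rw [CStarModule'.inner_sub_right, h (x - y), sub_self]
  exact sub_eq_zero.mp (CStarModule'.inner_self.mp h0)

lemma smul_op_smul (c : ℂ) (x : E) (a : A) : (c • x) <• a = c • (x <• a) := by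
  apply inner_ext A
  intro z
  simp only [CStarModule'.inner_op_smul_right, CStarModule'.inner_smul_left_complex,
    CStarModule'.inner_smul_right_complex, smul_mul_assoc]

lemma op_smul_op_smul (x : E) (a b : A) : (x <• a) <• b = x <• (a * b) := by
  apply inner_ext A
  intro z
  rw [CStarModule'.inner_op_smul_right, CStarModule'.inner_op_smul_right,
    CStarModule'.inner_op_smul_right, mul_assoc]

lemma add_op_smul (x y : E) (a : A) : (x + y) <• a = x <• a + y <• a := by
  apply inner_ext A
  intro z
  rw [CStarModule'.inner_op_smul_right, CStarModule'.inner_add_right,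
    CStarModule'.inner_add_right, CStarModule'.inner_op_smul_right,
    CStarModule'.inner_op_smul_right, add_mul]

lemma op_smul_add (x : E) (a b : A) : x <• (a + b) = x <• a + x <• b := by
  apply inner_ext A
  intro z
  rw [CStarModule'.inner_op_smul_right, CStarModule'.inner_add_right,
    CStarModule'.inner_op_smul_right, CStarModule'.inner_op_smul_right, mul_add]

lemma op_smul_csmul (x : E) (c : ℂ) (a : A) : x <• (c • a) = c • (x <• a) := by
  apply inner_ext A
  intro z
  simp only [CStarModule'.inner_op_smul_right, CStarModule'.inner_smul_right_complex,
    mul_smul_comm]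

lemma norm_op_smul_le (x : E) (a : A) : ‖x <• a‖ ≤ ‖x‖ * ‖a‖ := by
  have h2 : ‖x <• a‖ ^ 2 ≤ (‖x‖ * ‖a‖) ^ 2 := by
    rw [norm_sq_eq (A := A)]
    calc ‖⟪x <• a, x <• a⟫‖ = ‖star a * ⟪x, x⟫ * a‖ := by
          rw [CStarModule'.inner_op_smul_left, CStarModule'.inner_op_smul_right, ← mul_assoc]
      _ ≤ ‖star a‖ * ‖⟪x, x⟫‖ * ‖a‖ := by
          exact (norm_mul_le _ _).trans (by gcongr; exact norm_mul_le _ _)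
      _ = ‖a‖ * ‖x‖ ^ 2 * ‖a‖ := by rw [norm_star, norm_sq_eq (A := A)]
      _ = (‖x‖ * ‖a‖) ^ 2 := by ring
  exact (pow_le_pow_iff_left₀ (norm_nonneg _) (by positivity) (by norm_num)).mp h2

/-- Right multiplication `z ↦ x <• a` as a CLM in `a`. -/
noncomputable def lmulCLM (x : E) : A →L[ℂ] E :=
  LinearMap.mkContinuous
    { toFun := fun a => x <• a
      map_add' := fun a b => op_smul_add x a b
      map_smul' := fun c a => op_smul_csmul x c a }
    ‖x‖ (fun a => by simpa [mul_comm] using norm_op_smul_le x a)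

@[simp] lemma lmulCLM_apply (x : E) (a : A) : lmulCLM (E := E) x a = x <• a := rfl

/-- Rank one operator `θ x y : z ↦ x <• ⟪y, z⟫`. -/
noncomputable def theta (x y : E) : E →L[ℂ] E :=
  (lmulCLM x).comp (innerSL (A := A) y)

@[simp] lemma theta_apply (x y z : E) : theta (A := A) x y z = x <• ⟪y, z⟫ := rfl

/-- `u ↦ u <• a` as a CLM. -/
noncomputable def rmulCLM (a : A) : E →L[ℂ] E :=
  LinearMap.mkContinuous
    { toFun := fun u => u <• a
      map_add' := fun u v => add_op_smul u v a
      map_smul' := fun c u => smul_op_smul c u a }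
    ‖a‖ (fun u => by simpa [mul_comm] using norm_op_smul_le u a)

@[simp] lemma rmulCLM_apply (a : A) (u : E) : rmulCLM (E := E) a u = u <• a := rfl

lemma adj_symm {T T' : E →L[ℂ] E} (h : IsAdjointableWith (A := A) T T') :
    IsAdjointableWith (A := A) T' T := by
  obtain ⟨hmod, hinn⟩ := h
  constructor
  · intro a x
    apply inner_ext A
    intro z
    rw [← hinn z (x <• a), CStarModule'.inner_op_smul_right, CStarModule'.inner_op_smul_right,
      hinn z x]
  · intro x y
    rw [← CStarModule'.star_inner y, ← hinn y x, CStarModule'.star_inner]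

lemma adj_norm_le {T T' : E →L[ℂ] E} (h : IsAdjointableWith (A := A) T T') : ‖T‖ ≤ ‖T'‖ := by
  apply ContinuousLinearMap.opNorm_le_bound _ (norm_nonneg T')
  intro x
  rcases eq_or_lt_of_le (norm_nonneg (T x)) with h0 | h0
  · rw [← h0]; positivity
  · have h1 : ‖T x‖ ^ 2 ≤ (‖T'‖ * ‖x‖) * ‖T x‖ := by
      rw [CStarModule'.norm_sq_eq (A := A), h.2 x (T x)]
      calc ‖⟪x, T' (T x)⟫‖ ≤ ‖x‖ * ‖T' (T x)‖ := CStarModule'.norm_inner_le E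
        _ ≤ ‖x‖ * (‖T'‖ * ‖T x‖) := by gcongr; exact T'.le_opNorm _
        _ = (‖T'‖ * ‖x‖) * ‖T x‖ := by ring
    rw [pow_two] at h1
    exact le_of_mul_le_mul_right h1 h0

lemma adj_theta (x y : E) : IsAdjointableWith (A := A) (theta (A := A) x y) (theta (A := A) y x) := by
  constructor
  · intro a z
    rw [theta_apply, theta_apply, CStarModule'.inner_op_smul_right, ← op_smul_op_smul]
  · intro z w
    rw [theta_apply, theta_apply, CStarModule'.inner_op_smul_left,
      CStarModule'.inner_op_smul_right, CStarModule'.star_inner]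

lemma adj_add {T₁ T₁' T₂ T₂' : E →L[ℂ] E} (h₁ : IsAdjointableWith (A := A) T₁ T₁')
    (h₂ : IsAdjointableWith (A := A) T₂ T₂') :
    IsAdjointableWith (A := A) (T₁ + T₂) (T₁' + T₂') := by
  constructor
  · intro a x
    simp only [ContinuousLinearMap.add_apply, h₁.1 a x, h₂.1 a x, add_op_smul]
  · intro x y
    simp only [ContinuousLinearMap.add_apply, CStarModule'.inner_add_left,
      CStarModule'.inner_add_right, h₁.2 x y, h₂.2 x y]

lemma adj_smul {T T' : E →L[ℂ] E} (c : ℂ) (h : IsAdjointableWith (A := A) T T') :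
    IsAdjointableWith (A := A) (c • T) ((starRingEnd ℂ c) • T') := by
  constructor
  · intro a x
    simp only [ContinuousLinearMap.smul_apply, h.1 a x, smul_op_smul]
  · intro x y
    simp only [ContinuousLinearMap.smul_apply, CStarModule'.inner_smul_left_complex,
      CStarModule'.inner_smul_right_complex, h.2 x y]
    rw [starRingEnd_apply]

lemma adj_zero : IsAdjointableWith (A := A) (0 : E →L[ℂ] E) 0 := by
  constructor
  · intro a x
    apply inner_ext A
    intro z
    simp
  · intro x y
    simp

lemma adj_sub {T₁ T₁' T₂ T₂' : E →L[ℂ] E} (h₁ : IsAdjointableWith (A := A) T₁ T₁')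
    (h₂ : IsAdjointableWith (A := A) T₂ T₂') :
    IsAdjointableWith (A := A) (T₁ - T₂) (T₁' - T₂') := by
  have := adj_add h₁ (adj_smul (-1 : ℂ) h₂)
  simpa [sub_eq_add_neg, neg_smul, one_smul] using this

/-- The rank-one set. -/
def rankOneSet : Set (E →L[ℂ] E) := {S : E →L[ℂ] E | ∃ x y : E, ∀ z : E, S z = x <• ⟪y, z⟫}

lemma span_adj :
    ∀ F ∈ Submodule.span ℂ (rankOneSet (A := A) (E := E)),
      ∃ F', F' ∈ Submodule.span ℂ (rankOneSet (A := A) (E := E)) ∧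
        IsAdjointableWith (A := A) F F' := by
  intro F hF
  induction hF using Submodule.span_induction with
  | mem S hS =>
    obtain ⟨x, y, hxy⟩ := hS
    have hSeq : S = theta (A := A) x y := by
      ext z; rw [hxy z, theta_apply]
    exact ⟨theta (A := A) y x, Submodule.subset_span ⟨y, x, fun z => rfl⟩, hSeq ▸ adj_theta x y⟩
  | zero => exact ⟨0, Submodule.zero_mem _, adj_zero⟩
  | add S₁ S₂ _ _ ih₁ ih₂ =>
    obtain ⟨S₁', hm₁, ha₁⟩ := ih₁
    obtain ⟨S₂', hm₂, ha₂⟩ := ih₂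
    exact ⟨S₁' + S₂', Submodule.add_mem _ hm₁ hm₂, adj_add ha₁ ha₂⟩
  | smul c S _ ih =>
    obtain ⟨S', hm, ha⟩ := ih
    exact ⟨(starRingEnd ℂ c) • S', Submodule.smul_mem _ _ hm, adj_smul c ha⟩

open Filter Topology in
lemma tendsto_apply_of_tendsto {F : ℕ → E →L[ℂ] E} {K : E →L[ℂ] E}
    (h : Filter.Tendsto F Filter.atTop (nhds K)) (x : E) :
    Filter.Tendsto (fun n => F n x) Filter.atTop (nhds (K x)) := by
  have : Continuous fun T : E →L[ℂ] E => T x :=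
    (ContinuousLinearMap.apply ℂ E x).continuous
  exact (this.tendsto K).comp h

open Filter Topology in
lemma isCompactOp_adj {K : E →L[ℂ] E} (hK : IsCompactOp (A := A) K) :
    ∃ K', IsCompactOp (A := A) K' ∧ IsAdjointableWith (A := A) K K' := by
  have hK' : K ∈ closure (Submodule.span ℂ (rankOneSet (A := A) (E := E)) :
      Set (E →L[ℂ] E)) := hK
  obtain ⟨F, hFmem, hFK⟩ := mem_closure_iff_seq_limit.mp hK'
  choose F' hF'mem hF'adj using fun n => span_adj (F n) (hFmem n)
  have hcauchy : CauchySeq F := hFK.cauchySeq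
  have hcauchy' : CauchySeq F' := by
    rw [Metric.cauchySeq_iff] at hcauchy ⊢
    intro ε hε
    obtain ⟨N, hN⟩ := hcauchy ε hε
    refine ⟨N, fun m hm n hn => ?_⟩
    have hle : ‖F' m - F' n‖ ≤ ‖F m - F n‖ :=
      adj_norm_le (adj_symm (adj_sub (hF'adj m) (hF'adj n)))
    rw [dist_eq_norm] at *
    exact lt_of_le_of_lt hle (by rw [← dist_eq_norm]; exact hN m hm n hn)
  obtain ⟨K', hK'lim⟩ := cauchySeq_tendsto_of_complete hcauchy'
  refine ⟨K', ?_, ?_, ?_⟩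
  · exact mem_closure_of_tendsto hK'lim (Filter.Eventually.of_forall hF'mem)
  · intro a x
    have h1 : Filter.Tendsto (fun n => F n (x <• a)) Filter.atTop (nhds (K (x <• a))) :=
      tendsto_apply_of_tendsto hFK _
    have h2 : Filter.Tendsto (fun n => F n x <• a) Filter.atTop (nhds (K x <• a)) := by
      have hc : Continuous fun u : E => u <• a := (rmulCLM (E := E) a).continuous
      exact (hc.tendsto _).comp (tendsto_apply_of_tendsto hFK x)
    have heq : (fun n => F n (x <• a)) = fun n => F n x <• a := by
      funext n; exact (hF'adj n).1 a x
    rw [heq] at h1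
    exact tendsto_nhds_unique h1 h2
  · intro x y
    have hc1 : Continuous fun u : E => ⟪u, y⟫ := by
      have := CStarModule'.continuous_inner (A := A) (E := E)
      exact this.comp (continuous_id.prodMk continuous_const)
    have hc2 : Continuous fun u : E => ⟪x, u⟫ := by
      have := CStarModule'.continuous_inner (A := A) (E := E)
      exact this.comp (continuous_const.prodMk continuous_id)
    have h1 : Filter.Tendsto (fun n => ⟪F n x, y⟫) Filter.atTop (nhds ⟪K x, y⟫) :=
      (hc1.tendsto _).comp (tendsto_apply_of_tendsto hFK x)
    have h2 : Filter.Tendsto (fun n => ⟪x, F' n y⟫) Filter.atTop (nhds ⟪x, K' y⟫) :=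
      (hc2.tendsto _).comp (tendsto_apply_of_tendsto hK'lim y)
    have heq : (fun n => ⟪F n x, y⟫) = fun n => ⟪x, F' n y⟫ := by
      funext n; exact (hF'adj n).2 x y
    rw [heq] at h1
    exact tendsto_nhds_unique h1 h2

lemma isCompactOperator_theta [FiniteDimensional ℂ A] (x y : E) :
    IsCompactOperator ⇑(theta (A := A) x y) := by
  have hball : IsCompact (Metric.closedBall (0 : A) 1) := isCompact_closedBall 0 1
  have hcl : IsCompactOperator ⇑(lmulCLM (A := A) (E := E) x) := by
    have := (isCompactOperator_iff_image_closedBall_subset_compact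
      (f := (lmulCLM (A := A) (E := E) x : A →ₗ[ℂ] E)) (one_pos)).mpr
      ⟨(lmulCLM (A := A) (E := E) x) '' Metric.closedBall 0 1,
        hball.image (lmulCLM (A := A) (E := E) x).continuous, subset_of_eq rfl⟩
    exact this
  have : ⇑(theta (A := A) x y) = ⇑(lmulCLM (A := A) (E := E) x) ∘ ⇑(innerSL (A := A) y) := rfl
  rw [this]
  exact hcl.comp_clm _

lemma isCompactOp_isCompactOperator [FiniteDimensional ℂ A] {K : E →L[ℂ] E}
    (hK : IsCompactOp (A := A) K) : IsCompactOperator ⇑K := by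
  have hsub : (Submodule.span ℂ (rankOneSet (A := A) (E := E)) : Set (E →L[ℂ] E)) ⊆
      { T : E →L[ℂ] E | IsCompactOperator ⇑T } := by
    intro F hF
    induction hF using Submodule.span_induction with
    | mem S hS =>
      obtain ⟨x, y, hxy⟩ := hS
      have hSeq : S = theta (A := A) x y := by
        ext z; rw [hxy z, theta_apply]
      rw [hSeq]
      exact isCompactOperator_theta x y
    | zero =>
      have : ⇑(0 : E →L[ℂ] E) = (0 : E → E) := by ext z; simp
      show IsCompactOperator ⇑(0 : E →L[ℂ] E)
      rw [this]; exact isCompactOperator_zero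
    | add S₁ S₂ _ _ ih₁ ih₂ =>
      show IsCompactOperator ⇑(S₁ + S₂)
      have : ⇑(S₁ + S₂) = ⇑S₁ + ⇑S₂ := by ext z; simp
      rw [this]; exact ih₁.add ih₂
    | smul c S _ ih =>
      show IsCompactOperator ⇑(c • S)
      have : ⇑(c • S) = c • ⇑S := by ext z; simp
      rw [this]; exact ih.smul c
  have hclosed : IsClosed { T : E →L[ℂ] E | IsCompactOperator ⇑T } :=
    isClosed_setOf_isCompactOperator
  exact closure_minimal hsub hclosed hK

lemma sub_op_smul (u v : E) (a : A) : (u - v) <• a = u <• a - v <• a := by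
  apply inner_ext A
  intro z
  rw [CStarModule'.inner_op_smul_right, CStarModule'.inner_sub_right,
    CStarModule'.inner_sub_right, CStarModule'.inner_op_smul_right,
    CStarModule'.inner_op_smul_right, sub_mul]

lemma part2 [FiniteDimensional ℂ A] (K : E →L[ℂ] E) (hK : IsCompactOp (A := A) K)
    (lam : ℂ) (hlam : lam ≠ 0)
    (heig : ¬ ∃ x : E, x ≠ 0 ∧ lam • x - K x = 0) :
    InvertibleInL (A := A) (lam • (1 : E →L[ℂ] E) - K) := by
  push_neg at heig
  have hinj : ∀ x : E, lam • x - K x = 0 → x = 0 := by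
    intro x hx
    by_contra h0
    exact heig x h0 hx
  obtain ⟨K', hK'c, hadj⟩ := isCompactOp_adj hK
  have hKop : IsCompactOperator ⇑K := isCompactOp_isCompactOperator hK
  have hK'op : IsCompactOperator ⇑K' := isCompactOp_isCompactOperator hK'c
  set T : E →L[ℂ] E := lam • 1 - K with hT
  set T' : E →L[ℂ] E := (starRingEnd ℂ lam) • 1 - K' with hT'
  have hTapp : ∀ x, T x = lam • x - K x := fun x => rfl
  have hT'app : ∀ x, T' x = (starRingEnd ℂ lam) • x - K' x := fun x => rfl
  have hadjT : IsAdjointableWith (A := A) T T' := by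
    constructor
    · intro a x
      rw [hTapp, hTapp, hadj.1 a x, sub_op_smul, smul_op_smul]
    · intro x y
      rw [hTapp, hT'app, CStarModule'.inner_sub_left, CStarModule'.inner_sub_right,
        CStarModule'.inner_smul_left_complex, CStarModule'.inner_smul_right_complex,
        hadj.2 x y, starRingEnd_apply]
  have hTinj : Function.Injective ⇑T := by
    intro x y h
    have h0 : T (x - y) = 0 := by rw [map_sub, h, sub_self]
    rw [hTapp] at h0
    exact sub_eq_zero.mp (hinj _ h0)
  have hTsurj : Function.Surjective ⇑T := fredholm_surj K hKop lam hlam hinj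
  have hlam' : (starRingEnd ℂ lam) ≠ 0 := by
    rw [Ne, starRingEnd_apply, star_eq_zero]
    exact hlam
  have hinj' : ∀ x : E, (starRingEnd ℂ lam) • x - K' x = 0 → x = 0 := by
    intro y hy
    have hy0 : T' y = 0 := by rw [hT'app]; exact hy
    have hyy : ⟪y, y⟫ = (0 : A) := by
      obtain ⟨x, hx⟩ := hTsurj y
      calc ⟪y, y⟫ = ⟪T x, y⟫ := by rw [hx]
        _ = ⟪x, T' y⟫ := hadjT.2 x y
        _ = 0 := by rw [hy0, CStarModule'.inner_zero_right]
    exact CStarModule'.inner_self.mp hyy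
  have hT'inj : Function.Injective ⇑T' := by
    intro x y h
    have h0 : T' (x - y) = 0 := by rw [map_sub, h, sub_self]
    rw [hT'app] at h0
    exact sub_eq_zero.mp (hinj' _ h0)
  have hT'surj : Function.Surjective ⇑T' :=
    fredholm_surj K' hK'op (starRingEnd ℂ lam) hlam' hinj'
  let e : E ≃L[ℂ] E := ContinuousLinearEquiv.ofBijective T
    (LinearMap.ker_eq_bot.mpr hTinj) (LinearMap.range_eq_top.mpr hTsurj)
  let e' : E ≃L[ℂ] E := ContinuousLinearEquiv.ofBijective T'
    (LinearMap.ker_eq_bot.mpr hT'inj) (LinearMap.range_eq_top.mpr hT'surj)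
  have he : ∀ x, e x = T x := fun x => rfl
  have he' : ∀ x, e' x = T' x := fun x => rfl
  have hTe : ∀ x, T ((e.symm : E →L[ℂ] E) x) = x := by
    intro x
    rw [← he]
    exact e.apply_symm_apply x
  have heT : ∀ x, (e.symm : E →L[ℂ] E) (T x) = x := by
    intro x
    rw [← he]
    exact e.symm_apply_apply x
  have hT'e : ∀ x, T' ((e'.symm : E →L[ℂ] E) x) = x := by
    intro x
    rw [← he']
    exact e'.apply_symm_apply x
  refine ⟨(e.symm : E →L[ℂ] E), (e'.symm : E →L[ℂ] E), ⟨?_, ?_⟩, ?_, ?_⟩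
  · intro a x
    apply hTinj
    rw [hTe, hadjT.1 a _, hTe]
  · intro x y
    calc ⟪(e.symm : E →L[ℂ] E) x, y⟫
        = ⟪(e.symm : E →L[ℂ] E) x, T' ((e'.symm : E →L[ℂ] E) y)⟫ := by rw [hT'e]
      _ = ⟪T ((e.symm : E →L[ℂ] E) x), (e'.symm : E →L[ℂ] E) y⟫ := (hadjT.2 _ _).symm
      _ = ⟪x, (e'.symm : E →L[ℂ] E) y⟫ := by rw [hTe]
  · ext x
    exact heT x
  · ext x
    exact hTe x

lemma isCompactOp_comp_right {K S S' : E →L[ℂ] E} (hK : IsCompactOp (A := A) K)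
    (hadjS : IsAdjointableWith (A := A) S S') : IsCompactOp (A := A) (K.comp S) := by
  set Φ : (E →L[ℂ] E) →L[ℂ] (E →L[ℂ] E) := (ContinuousLinearMap.compL ℂ E E E).flip S with hΦ
  have hΦapp : ∀ T : E →L[ℂ] E, Φ T = T.comp S := fun T => rfl
  have hmaps : Set.MapsTo ⇑Φ
      ((Submodule.span ℂ (rankOneSet (A := A) (E := E))) : Set (E →L[ℂ] E))
      ((Submodule.span ℂ (rankOneSet (A := A) (E := E))) : Set (E →L[ℂ] E)) := by
    intro F hF
    induction hF using Submodule.span_induction with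
    | mem S₀ hS₀ =>
      obtain ⟨x, y, hxy⟩ := hS₀
      apply Submodule.subset_span
      refine ⟨x, S' y, fun z => ?_⟩
      rw [hΦapp, ContinuousLinearMap.comp_apply, hxy (S z), ← (adj_symm hadjS).2 y z]
    | zero =>
      rw [SetLike.mem_coe, map_zero]
      exact Submodule.zero_mem _
    | add F₁ F₂ _ _ ih₁ ih₂ =>
      rw [SetLike.mem_coe, map_add]
      exact Submodule.add_mem _ ih₁ ih₂
    | smul c F _ ih =>
      rw [SetLike.mem_coe, map_smul]
      exact Submodule.smul_mem _ c ih
  have := map_mem_closure Φ.continuous hK hmaps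
  rwa [hΦapp] at this

lemma isCompactOp_neg {K : E →L[ℂ] E} (hK : IsCompactOp (A := A) K) :
    IsCompactOp (A := A) (-K) := by
  have hmaps : Set.MapsTo (fun T : E →L[ℂ] E => -T)
      ((Submodule.span ℂ (rankOneSet (A := A) (E := E))) : Set (E →L[ℂ] E))
      ((Submodule.span ℂ (rankOneSet (A := A) (E := E))) : Set (E →L[ℂ] E)) :=
    fun F hF => Submodule.neg_mem _ hF
  exact map_mem_closure continuous_neg hK hmaps

lemma finGen_of_one (h1 : IsCompactOp (A := A) (1 : E →L[ℂ] E)) :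
    IsFinGen (A := A) (E := E) := by
  classical
  obtain ⟨F, hFspan, hFdist⟩ :
      ∃ F ∈ ((Submodule.span ℂ (rankOneSet (A := A) (E := E))) : Set (E →L[ℂ] E)),
        dist (1 : E →L[ℂ] E) F < 1 := Metric.mem_closure_iff.mp h1 1 one_pos
  have hnorm : ‖(1 : E →L[ℂ] E) - F‖ < 1 := by rwa [dist_eq_norm] at hFdist
  set u : (E →L[ℂ] E)ˣ := Units.oneSub ((1 : E →L[ℂ] E) - F) hnorm with hu
  have huval : (u : E →L[ℂ] E) = F := by
    rw [hu, Units.val_oneSub, sub_sub_cancel]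
  have hFsurj : ∀ w : E, F ((↑u⁻¹ : E →L[ℂ] E) w) = w := by
    intro w
    have h2 : ((u : E →L[ℂ] E) * (↑u⁻¹ : E →L[ℂ] E)) w = (1 : E →L[ℂ] E) w := by
      rw [u.mul_inv]
    rw [ContinuousLinearMap.mul_apply, huval, ContinuousLinearMap.one_apply] at h2
    exact h2
  rw [SetLike.mem_coe] at hFspan
  obtain ⟨c, hcsupp, hcsum⟩ := Submodule.mem_span_set.mp hFspan
  choose xw yw hxyw using fun (S : E →L[ℂ] E) (hS : S ∈ rankOneSet (A := A) (E := E)) => hS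
  set n := c.support.card with hn
  set eqv := c.support.equivFin with heqv
  set g : Fin n → E := fun i => xw ((eqv.symm i) : E →L[ℂ] E)
    (hcsupp (eqv.symm i).2) with hg
  refine ⟨n, g, fun w => ?_⟩
  set v : E := (↑u⁻¹ : E →L[ℂ] E) w with hv
  have hw : w = F v := (hFsurj w).symm
  have hFv : F v = c.sum fun S r => r • S v := by
    rw [← hcsum]
    have := map_finsuppSum (ContinuousLinearMap.apply ℂ E v) c
      (fun (mi : E →L[ℂ] E) (r : ℂ) => r • mi)
    simpa using this
  rw [hw, hFv, Finsupp.sum]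
  refine Submodule.sum_mem _ (fun S hS => ?_)
  apply Submodule.smul_mem
  apply Submodule.subset_span
  have hS' : S ∈ rankOneSet (A := A) (E := E) := hcsupp hS
  refine ⟨eqv ⟨S, hS⟩, ⟪yw S hS', v⟫, ?_⟩
  have hcoord : g (eqv ⟨S, hS⟩) = xw S hS' := by
    simp only [hg, Equiv.symm_apply_apply]
  rw [hcoord, hxyw S hS' v]

lemma part1 (K : E →L[ℂ] E) (hK : IsCompactOp (A := A) K)
    (hfin : ¬ IsFinGen (A := A) (E := E)) :
    ¬ InvertibleInL (A := A) ((0 : ℂ) • (1 : E →L[ℂ] E) - K) := by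
  rintro ⟨S, S', hadjS, hST, hTS⟩
  apply hfin
  apply finGen_of_one (A := A)
  have hTK : (0 : ℂ) • (1 : E →L[ℂ] E) - K = -K := by simp
  rw [hTK] at hTS
  have h1 : (1 : E →L[ℂ] E) = -(K.comp S) := by
    rw [← hTS]
    ext x
    simp
  have hcomp : IsCompactOp (A := A) (K.comp S) := isCompactOp_comp_right hK hadjS
  rw [h1]
  exact isCompactOp_neg hcomp

end Cstmt18

/-- Over a finite dimensional C*-algebra: (1) if `E` is not finitely generated, then
`0 ∈ σ(K)` for every compact operator `K`; (2) every nonzero `λ ∈ σ(K)` is an eigenvalue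
of `K`. -/
theorem stmt18 [FiniteDimensional ℂ A] (K : E →L[ℂ] E) (hK : IsCompactOp (A := A) K) :
    (¬ IsFinGen (A := A) (E := E) →
      ¬ InvertibleInL (A := A) ((0 : ℂ) • (1 : E →L[ℂ] E) - K)) ∧
    (∀ lam : ℂ, lam ≠ 0 → ¬ InvertibleInL (A := A) (lam • (1 : E →L[ℂ] E) - K) →
      ∃ x : E, x ≠ 0 ∧ lam • x - K x = 0) := by
  constructor
  · intro hfin
    exact Cstmt18.part1 K hK hfin
  · intro lam hlam hninv
    by_contra h
    exact hninv (Cstmt18.part2 K hK lam hlam h)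

end
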